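/- Let G be a locally compact NSS local group with special neighborhood 𝒰, and let Vₙ := {x ∈ G : ord(x) ≥ n}. Then (Vₙ)_{n≥1} is a decreasing sequence of compact symmetric neighborhoods of 1 forming a countable neighborhood basis of 1 in G; moreover for every neighborhood U of 1 and every m, for all sufficiently large n the product x₁⋯x_m is defined and lies in U for all x₁,…,x_m ∈ Vₙ. -/

import Mathlib

open scoped Topology Manifold ENNReal

/-- A local group in the sense of Goldbring's "Hilbert's Fifth Problem for Local Groups":
a Hausdorff-intended topological space `G` with a distinguished element `one`, a partial
inversion `inv` defined (i.e. meaningful) on the open set `Lambda`, and a partial product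
`mul` meaningful on the open set `Omega`. -/
structure LocalGroup (G : Type*) [TopologicalSpace G] where
  one : G
  Lambda : Set G
  Omega : Set (G × G)
  inv : G → G
  mul : G → G → G
  isOpen_Lambda : IsOpen Lambda
  isOpen_Omega : IsOpen Omega
  one_mem_Lambda : one ∈ Lambda
  pair_one_left : ∀ x : G, (one, x) ∈ Omega
  pair_one_right : ∀ x : G, (x, one) ∈ Omega
  continuousOn_inv : ContinuousOn inv Lambda
  continuousOn_mul : ContinuousOn (fun q : G × G => mul q.1 q.2) Omega
  one_mul : ∀ x : G, mul one x = x
  mul_one : ∀ x : G, mul x one = x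
  mem_inv_right : ∀ x ∈ Lambda, (x, inv x) ∈ Omega
  mem_inv_left : ∀ x ∈ Lambda, (inv x, x) ∈ Omega
  mul_inv_self : ∀ x ∈ Lambda, mul x (inv x) = one
  inv_mul_self : ∀ x ∈ Lambda, mul (inv x) x = one
  assoc : ∀ x y z : G, (x, y) ∈ Omega → (y, z) ∈ Omega → (mul x y, z) ∈ Omega →
    (x, mul y z) ∈ Omega → mul (mul x y) z = mul x (mul y z)

namespace LocalGroup

variable {G : Type*} {G' : Type*} [TopologicalSpace G] [TopologicalSpace G']

/-- The standing conventions of the paper: `Λ = G`, and whenever `(g,h) ∈ Ω` also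
`(h⁻¹, g⁻¹) ∈ Ω` with `(gh)⁻¹ = h⁻¹g⁻¹`. -/
def Std (L : LocalGroup G) : Prop :=
  L.Lambda = Set.univ ∧
    ∀ g h : G, (g, h) ∈ L.Omega →
      (L.inv h, L.inv g) ∈ L.Omega ∧ L.inv (L.mul g h) = L.mul (L.inv h) (L.inv g)

/-- A symmetric subset: contained in the domain of inversion and stable under it. -/
def IsSymmetric (L : LocalGroup G) (S : Set G) : Prop :=
  S ⊆ L.Lambda ∧ L.inv '' S = S

/-- A subgroup of a local group. -/
def IsSubgroup (L : LocalGroup G) (H : Set G) : Prop :=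
  L.one ∈ H ∧ H ⊆ L.Lambda ∧ (∀ x ∈ H, ∀ y ∈ H, (x, y) ∈ L.Omega) ∧
    (∀ x ∈ H, L.inv x ∈ H) ∧ ∀ x ∈ H, ∀ y ∈ H, L.mul x y ∈ H

/-- No small subgroups. -/
def NSS (L : LocalGroup G) : Prop :=
  ∃ U ∈ 𝓝 L.one, ∀ H : Set G, L.IsSubgroup H → H ⊆ U → H = {L.one}

/-- No small connected subgroups. -/
def NSCS (L : LocalGroup G) : Prop :=
  ∃ U ∈ 𝓝 L.one, ∀ H : Set G, L.IsSubgroup H → IsConnected H → H ⊆ U → H = {L.one}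

/-- `(a₁, …, aₙ)` represents `b`: all ways of multiplying the list are defined and equal `b`.
By convention the empty list represents `one`. -/
def Represents (L : LocalGroup G) : List G → G → Prop
  | [], b => b = L.one
  | [a], b => b = a
  | a :: c :: l, b =>
      ∀ i : ℕ, 1 ≤ i → i < (a :: c :: l).length →
        ∃ b₁ b₂ : G, L.Represents ((a :: c :: l).take i) b₁ ∧
          L.Represents ((a :: c :: l).drop i) b₂ ∧ (b₁, b₂) ∈ L.Omega ∧ L.mul b₁ b₂ = b
termination_by l => l.length
decreasing_by
  all_goals simp only [List.length_cons, List.length_take, List.length_drop] at *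
  all_goals omega

/-- `A^n`: all products of `n` elements of `A` (only meaningful when such products are defined). -/
def setPow (L : LocalGroup G) (A : Set G) (n : ℕ) : Set G :=
  {b | ∃ l : List G, l.length = n ∧ (∀ a ∈ l, a ∈ A) ∧ L.Represents l b}

/-- A chain `U₁ ⊇ U₂ ⊇ ⋯` of symmetric open neighborhoods of `1` such that products of `n`
elements of `Uₙ` are defined (the sets `𝒰ₙ` of the paper). -/
def IsProdChain (L : LocalGroup G) (U : ℕ → Set G) : Prop :=
  ∀ n : ℕ, 1 ≤ n →
    IsOpen (U n) ∧ L.one ∈ U n ∧ L.IsSymmetric (U n) ∧ U (n + 1) ⊆ U n ∧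
      ∀ l : List G, l.length = n → (∀ a ∈ l, a ∈ U n) → ∃ b, L.Represents l b

/-- `a^k` is defined and equal to `b`, for `k : ℤ` (with `a^(-n) := (a⁻¹)^n`). -/
def zpowRep (L : LocalGroup G) (a : G) : ℤ → G → Prop
  | Int.ofNat n, b => L.Represents (List.replicate n a) b
  | Int.negSucc n, b => L.Represents (List.replicate (n + 1) (L.inv a)) b

/-- A special neighborhood (relative to a product chain `U`): a compact symmetric
neighborhood of `1` contained in `U 2`, containing no nontrivial subgroup, on which
squaring is injective. -/
def IsSpecialNbhd (L : LocalGroup G) (U : ℕ → Set G) (SU : Set G) : Prop :=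
  IsCompact SU ∧ SU ∈ 𝓝 L.one ∧ L.IsSymmetric SU ∧ SU ⊆ U 2 ∧
    (∀ H : Set G, L.IsSubgroup H → H ⊆ SU → H = {L.one}) ∧
    ∀ x ∈ SU, ∀ y ∈ SU, L.mul x x = L.mul y y → x = y

/-- `Λ_U` for the restriction `G|U`. -/
def restLambda (L : LocalGroup G) (U : Set G) : Set G := L.Lambda ∩ U ∩ L.inv ⁻¹' U

/-- `Ω_U` for the restriction `G|U`. -/
def restOmega (L : LocalGroup G) (U : Set G) : Set (G × G) :=
  {q | q ∈ L.Omega ∧ q.1 ∈ U ∧ q.2 ∈ U ∧ L.mul q.1 q.2 ∈ U}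

/-- A morphism of local groups `L → L'`. -/
def IsMorphism (L : LocalGroup G) (L' : LocalGroup G') (f : G → G') : Prop :=
  Continuous f ∧ f L.one = L'.one ∧
    (∀ x ∈ L.Lambda, f x ∈ L'.Lambda ∧ f (L.inv x) = L'.inv (f x)) ∧
    ∀ x y : G, (x, y) ∈ L.Omega → ((f x, f y) ∈ L'.Omega ∧ f (L.mul x y) = L'.mul (f x) (f y))

/-- `f` is a morphism of local groups `G|U → G'|U'` between restrictions. -/
def IsRestMorphism (L : LocalGroup G) (L' : LocalGroup G') (U : Set G) (U' : Set G')
    (f : G → G') : Prop :=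
  ContinuousOn f U ∧ Set.MapsTo f U U' ∧ f L.one = L'.one ∧
    (∀ x ∈ L.restLambda U, f x ∈ L'.restLambda U' ∧ f (L.inv x) = L'.inv (f x)) ∧
    ∀ x y : G, (x, y) ∈ L.restOmega U →
      ((f x, f y) ∈ L'.restOmega U' ∧ f (L.mul x y) = L'.mul (f x) (f y))

/-- Local isomorphism: a homeomorphism between open neighborhoods of the identities which
is a morphism of restrictions in both directions. -/
def LocallyIsomorphic (L : LocalGroup G) (L' : LocalGroup G') : Prop :=
  ∃ (U : Set G) (U' : Set G') (f : G → G') (g : G' → G),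
    IsOpen U ∧ L.one ∈ U ∧ IsOpen U' ∧ L'.one ∈ U' ∧
      Set.BijOn f U U' ∧ (∀ x ∈ U, g (f x) = x) ∧ (∀ y ∈ U', f (g y) = y) ∧
      L.IsRestMorphism L' U U' f ∧ L'.IsRestMorphism L U' U g

/-- A topological group regarded as a local group with `Λ = G` and `Ω = G × G`. -/
def ofGroup (H : Type*) [TopologicalSpace H] [Group H] [IsTopologicalGroup H] : LocalGroup H where
  one := 1
  Lambda := Set.univ
  Omega := Set.univ
  inv := fun x => x⁻¹
  mul := fun x y => x * y
  isOpen_Lambda := isOpen_univ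
  isOpen_Omega := isOpen_univ
  one_mem_Lambda := trivial
  pair_one_left := fun _ => trivial
  pair_one_right := fun _ => trivial
  continuousOn_inv := continuous_inv.continuousOn
  continuousOn_mul := (continuous_fst.mul continuous_snd).continuousOn
  one_mul := fun x => _root_.one_mul x
  mul_one := fun x => _root_.mul_one x
  mem_inv_right := fun _ _ => trivial
  mem_inv_left := fun _ _ => trivial
  mul_inv_self := fun x _ => mul_inv_cancel x
  inv_mul_self := fun x _ => inv_mul_cancel x
  assoc := fun x y z _ _ _ _ => mul_assoc x y z

/-- A bundled (finite-dimensional, real) Lie group in the Mathlib sense. -/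
structure BundledLieGroup : Type 1 where
  n : ℕ
  carrier : Type
  [ts : TopologicalSpace carrier]
  [t2 : T2Space carrier]
  [grp : Group carrier]
  [tg : IsTopologicalGroup carrier]
  [cs : ChartedSpace (EuclideanSpace ℝ (Fin n)) carrier]
  [lie : LieGroup (𝓡 n) (⊤ : ℕ∞) carrier]

/-- `L` is locally isomorphic to (the local group underlying) a Lie group. -/
def IsLieLocallyIsomorphic (L : LocalGroup G) : Prop :=
  ∃ B : BundledLieGroup,
    letI := B.ts; letI := B.grp; letI := B.tg
    L.LocallyIsomorphic (ofGroup B.carrier)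

/-- A local one-parameter subgroup of `L`, with domain `(-r, r)` (where `r ∈ (0,∞]`). -/
structure LocalOnePS (L : LocalGroup G) where
  r : ℝ≥0∞
  r_pos : 0 < r
  toFun : ℝ → G
  mem_Lambda : ∀ t : ℝ, ENNReal.ofReal |t| < r → toFun t ∈ L.Lambda
  continuousOn : ContinuousOn toFun {t : ℝ | ENNReal.ofReal |t| < r}
  add : ∀ s t : ℝ, ENNReal.ofReal |s| < r → ENNReal.ofReal |t| < r →
    ENNReal.ofReal |s + t| < r →
      (toFun s, toFun t) ∈ L.Omega ∧ toFun (s + t) = L.mul (toFun s) (toFun t)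

variable {L : LocalGroup G}

/-- Equivalence (equality of germs at 0) of local one-parameter subgroups. -/
def OnePSEquiv (X Y : LocalOnePS L) : Prop :=
  ∃ s : ℝ, 0 < s ∧ ENNReal.ofReal s < X.r ∧ ENNReal.ofReal s < Y.r ∧
    ∀ t : ℝ, |t| < s → X.toFun t = Y.toFun t

theorem onePS_exists_small (X : LocalOnePS L) : ∃ s : ℝ, 0 < s ∧ ENNReal.ofReal s < X.r := by
  rcases eq_or_ne X.r ⊤ with h | h
  · exact ⟨1, one_pos, by simp [h]⟩
  · have h0 : X.r ≠ 0 := ne_of_gt X.r_pos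
    have htr : 0 < X.r.toReal := ENNReal.toReal_pos h0 h
    refine ⟨X.r.toReal / 2, by linarith, ?_⟩
    rw [ENNReal.ofReal_lt_iff_lt_toReal (by linarith) h]
    linarith

instance onePSSetoid (L : LocalGroup G) : Setoid (LocalOnePS L) where
  r := OnePSEquiv
  iseqv := by
    constructor
    · intro X
      obtain ⟨s, hs, hsr⟩ := onePS_exists_small X
      exact ⟨s, hs, hsr, hsr, fun _ _ => rfl⟩
    · rintro X Y ⟨s, hs, h1, h2, h3⟩
      exact ⟨s, hs, h2, h1, fun t ht => (h3 t ht).symm⟩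
    · rintro X Y Z ⟨s1, hs1, hX1, hY1, hag1⟩ ⟨s2, hs2, hY2, hZ2, hag2⟩
      refine ⟨min s1 s2, lt_min hs1 hs2, ?_, ?_, fun t ht => ?_⟩
      · exact lt_of_le_of_lt (ENNReal.ofReal_le_ofReal (min_le_left _ _)) hX1
      · exact lt_of_le_of_lt (ENNReal.ofReal_le_ofReal (min_le_right _ _)) hZ2
      · rw [hag1 t (lt_of_lt_of_le ht (min_le_left _ _)),
          hag2 t (lt_of_lt_of_le ht (min_le_right _ _))]

/-- `L(G)`: the set of germs at `0` of local one-parameter subgroups of `L`. -/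
abbrev LGQuot (L : LocalGroup G) := Quotient (onePSSetoid L)

/-- The trivial local one-parameter subgroup `O`. -/
noncomputable def constOnePS (L : LocalGroup G) : LocalOnePS L where
  r := ⊤
  r_pos := by simp
  toFun := fun _ => L.one
  mem_Lambda := fun _ _ => L.one_mem_Lambda
  continuousOn := continuousOn_const
  add := fun s t _ _ _ => ⟨L.pair_one_left L.one, (L.one_mul L.one).symm⟩

/-- The domain of a germ of local one-parameter subgroups: the union of the domains of its
representatives. -/
def germDomain (L : LocalGroup G) (X : LGQuot L) : Set ℝ :=
  {t | ∃ Y : LocalOnePS L, ⟦Y⟧ = X ∧ ENNReal.ofReal |t| < Y.r}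

/-- Evaluation of a germ at a point of its domain (junk value outside). This is
well defined, i.e. independent of the choice of representative, by the basic theory
of local one-parameter subgroups. -/
noncomputable def germEval (L : LocalGroup G) (X : LGQuot L) (t : ℝ) : G := by
  classical exact if h : ∃ Y : LocalOnePS L, ⟦Y⟧ = X ∧ ENNReal.ofReal |t| < Y.r then h.choose.toFun t
  else L.one

/-- The topology on `L(G)` generated by the subbasic sets `B_{C,U}` for `C ⊆ (-2,2)`
compact and `U ⊆ G` open. -/
instance germTopology (L : LocalGroup G) : TopologicalSpace (LGQuot L) :=
  TopologicalSpace.generateFrom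
    {S | ∃ (C : Set ℝ) (U : Set G), IsCompact C ∧ C ⊆ Set.Ioo (-2 : ℝ) 2 ∧ IsOpen U ∧
      S = {X : LGQuot L | C ⊆ germDomain L X ∧ ∀ t ∈ C, germEval L X t ∈ U}}

/-- A sublocal group `H` of `L`, with associated neighborhood `V`. -/
def IsSublocalGroup (L : LocalGroup G) (H V : Set G) : Prop :=
  L.one ∈ H ∧ IsOpen V ∧ L.one ∈ V ∧ H ⊆ V ∧ (∀ x ∈ closure H, x ∈ V → x ∈ H) ∧
    (∀ x ∈ H, x ∈ L.Lambda → L.inv x ∈ V → L.inv x ∈ H) ∧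
    ∀ x ∈ H, ∀ y ∈ H, (x, y) ∈ L.Omega → L.mul x y ∈ V → L.mul x y ∈ H

/-- A normal sublocal group `H` of `L`, with normalizing neighborhood `V`. -/
def IsNormalSublocalGroup (L : LocalGroup G) (H V : Set G) : Prop :=
  L.IsSublocalGroup H V ∧ L.IsSymmetric V ∧
    ∀ y ∈ V, ∀ x ∈ H, ∀ b : G, L.Represents [y, x, L.inv y] b → b ∈ V → b ∈ H

/-- The coset relation `E_H` on `W`. -/
def quotRel (L : LocalGroup G) (H W : Set G) : ↥W → ↥W → Prop :=
  fun x y => L.mul (L.inv ↑x) ↑y ∈ H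

/-- The local coset space `W/E_H`, with the quotient topology. -/
abbrev QuotCarrier (L : LocalGroup G) (H W : Set G) := Quot (L.quotRel H W)

/-- `Q` is the local quotient group structure `(G/H)_W` on `W/E_H`. -/
def IsQuotStructure (L : LocalGroup G) (H W : Set G) (h1W : L.one ∈ W)
    (Q : LocalGroup (L.QuotCarrier H W)) : Prop :=
  Q.one = Quot.mk (L.quotRel H W) ⟨L.one, h1W⟩ ∧
    Q.Lambda = Set.univ ∧
    (∀ (x : ↥W) (hx : L.inv ↑x ∈ W),
      Q.inv (Quot.mk (L.quotRel H W) x) = Quot.mk (L.quotRel H W) ⟨L.inv ↑x, hx⟩) ∧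
    Q.Omega = {q | ∃ x y : ↥W, ((x : G), (y : G)) ∈ L.Omega ∧ L.mul ↑x ↑y ∈ W ∧
      q = (Quot.mk (L.quotRel H W) x, Quot.mk (L.quotRel H W) y)} ∧
    ∀ (x y : ↥W) (_ : ((x : G), (y : G)) ∈ L.Omega) (hm : L.mul ↑x ↑y ∈ W),
      Q.mul (Quot.mk (L.quotRel H W) x) (Quot.mk (L.quotRel H W) y) =
        Quot.mk (L.quotRel H W) ⟨L.mul ↑x ↑y, hm⟩

/-- The sup-norm of a real-valued function. -/
noncomputable def supNorm (f : G → ℝ) : ℝ := ⨆ x : G, |f x|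

/-- `W²` = the set of products of two elements of `W`. -/
def sqSet (L : LocalGroup G) (W : Set G) : Set G :=
  {z | ∃ a ∈ W, ∃ b ∈ W, (a, b) ∈ L.Omega ∧ L.mul a b = z}

/-- The (left-translation) action `a · f` of `a` on functions supported in `W`:
`(a·f)(x) = f (a⁻¹ x)` for `x ∈ W²` and `0` otherwise. -/
noncomputable def act (L : LocalGroup G) (W : Set G) (a : G) (f : G → ℝ) : G → ℝ := by
  classical exact fun x => if x ∈ L.sqSet W then f (L.mul (L.inv a) x) else 0

/-- `ord(x) ≥ n` relative to the special neighborhood `SU`: all powers `x^k`, `|k| ≤ n`,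
are defined and lie in `SU`. -/
def ordGE (L : LocalGroup G) (SU : Set G) (n : ℕ) : Set G :=
  {x | ∀ k : ℤ, k.natAbs ≤ n → ∃ b : G, L.zpowRep x k b ∧ b ∈ SU}

end LocalGroup

open LocalGroup


open LocalGroup
namespace LocalGroup
variable {G : Type*} [TopologicalSpace G] (L : LocalGroup G)

theorem inv_one' : L.inv L.one = L.one := by
  have h := L.mul_inv_self L.one L.one_mem_Lambda
  rw [L.one_mul] at h; exact h

theorem inv_unique' (hstd : L.Std) {x y : G} (hΩ : (x, y) ∈ L.Omega)
    (h : L.mul x y = L.one) : L.inv x = y := by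
  have hxΛ : x ∈ L.Lambda := by rw [hstd.1]; trivial
  have h1 : (L.inv x, x) ∈ L.Omega := L.mem_inv_left x hxΛ
  have h3 : (L.mul (L.inv x) x, y) ∈ L.Omega := by rw [L.inv_mul_self x hxΛ]; exact L.pair_one_left y
  have h4 : (L.inv x, L.mul x y) ∈ L.Omega := by rw [h]; exact L.pair_one_right _
  have := L.assoc (L.inv x) x y h1 hΩ h3 h4
  rw [L.inv_mul_self x hxΛ, L.one_mul, h, L.mul_one] at this
  exact this.symm

theorem inv_inv' (hstd : L.Std) (x : G) : L.inv (L.inv x) = x := by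
  have hxΛ : x ∈ L.Lambda := by rw [hstd.1]; trivial
  exact L.inv_unique' hstd (L.mem_inv_left x hxΛ) (L.inv_mul_self x hxΛ)

theorem represents_nil : L.Represents [] L.one := by rw [Represents]
theorem represents_single (a : G) : L.Represents [a] a := by rw [Represents]
theorem represents_nil_iff (b : G) : L.Represents [] b ↔ b = L.one := by rw [Represents]
theorem represents_single_iff (a b : G) : L.Represents [a] b ↔ b = a := by rw [Represents]

theorem represents_split {l : List G} {b : G} (h : L.Represents l b) (i : ℕ)
    (h1 : 1 ≤ i) (h2 : i < l.length) :
    ∃ b₁ b₂, L.Represents (l.take i) b₁ ∧ L.Represents (l.drop i) b₂ ∧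
      (b₁, b₂) ∈ L.Omega ∧ L.mul b₁ b₂ = b := by
  match l with
  | [] => simp at h2
  | [a] => simp at h2; omega
  | a :: c :: t => rw [Represents] at h; exact h i h1 h2

theorem represents_of_forall {l : List G} {b : G} (hlen : 2 ≤ l.length)
    (h : ∀ i : ℕ, 1 ≤ i → i < l.length →
      ∃ b₁ b₂, L.Represents (l.take i) b₁ ∧ L.Represents (l.drop i) b₂ ∧
        (b₁, b₂) ∈ L.Omega ∧ L.mul b₁ b₂ = b) : L.Represents l b := by
  match l with
  | [] => simp at hlen
  | [a] => simp at hlen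
  | a :: c :: t => rw [Represents]; exact h

/-- the left-fold product of a list -/
def prodL (l : List G) : G := l.foldl L.mul L.one

theorem prodL_nil : L.prodL [] = L.one := rfl
theorem prodL_concat (l : List G) (z : G) : L.prodL (l ++ [z]) = L.mul (L.prodL l) z := by
  simp [prodL]
theorem prodL_single (a : G) : L.prodL [a] = a := by
  simp [prodL, L.one_mul]

theorem represents_eq {l : List G} {b : G} (h : L.Represents l b) : b = L.prodL l := by
  induction l using List.reverseRecOn generalizing b with
  | nil => rw [represents_nil_iff] at h; simpa [prodL_nil] using h
  | append_singleton l z ih =>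
    match l with
    | [] =>
      simp only [List.nil_append] at h ⊢
      rw [represents_single_iff] at h; simpa [prodL_single] using h
    | a :: t =>
      obtain ⟨b₁, b₂, h₁, h₂, hΩ, hm⟩ := L.represents_split h ((a :: t).length)
        (by simp) (by simp)
      rw [List.take_left] at h₁
      rw [List.drop_left] at h₂
      rw [represents_single_iff] at h₂
      rw [prodL_concat, ← ih h₁, ← h₂, hm]
end LocalGroup

open LocalGroup
namespace LocalGroup
variable {G : Type*} [TopologicalSpace G] (L : LocalGroup G)

/-- natural powers -/
def powN (x : G) : ℕ → G
  | 0 => L.one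
  | n + 1 => L.mul (powN x n) x

theorem powN_zero (x : G) : L.powN x 0 = L.one := rfl
theorem powN_succ (x : G) (n : ℕ) : L.powN x (n+1) = L.mul (L.powN x n) x := rfl
theorem powN_one (x : G) : L.powN x 1 = x := by rw [powN_succ, powN_zero, L.one_mul]
theorem powN_base_one (n : ℕ) : L.powN L.one n = L.one := by
  induction n with
  | zero => rfl
  | succ n ih => rw [powN_succ, ih, L.mul_one]

theorem prodL_replicate (x : G) (n : ℕ) : L.prodL (List.replicate n x) = L.powN x n := by
  induction n with
  | zero => rfl
  | succ n ih => rw [List.replicate_succ', prodL_concat, ih, powN_succ]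

section
variable {L} {Un : ℕ → Set G} (hUn : L.IsProdChain Un) {SU : Set G}
  (hSU : L.IsSpecialNbhd Un SU)

include hSU in
theorem one_mem_SU : L.one ∈ SU := mem_of_mem_nhds hSU.2.1

include hSU in
theorem inv_mem_SU {x : G} (hx : x ∈ SU) : L.inv x ∈ SU := by
  have := hSU.2.2.1.2
  rw [← this]; exact ⟨x, hx, rfl⟩

include hUn hSU in
theorem pairSU {a b : G} (ha : a ∈ SU) (hb : b ∈ SU) : (a, b) ∈ L.Omega := by
  obtain ⟨c, hc⟩ := (hUn 2 one_le_two).2.2.2.2 [a, b] rfl (by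
    intro y hy
    simp only [List.mem_cons, List.not_mem_nil, or_false] at hy
    rcases hy with rfl | rfl
    · exact hSU.2.2.2.1 ha
    · exact hSU.2.2.2.1 hb)
  obtain ⟨b₁, b₂, h₁, h₂, hΩ, -⟩ := L.represents_split hc 1 le_rfl (by simp)
  simp only [List.take, List.drop] at h₁ h₂
  rw [represents_single_iff] at h₁ h₂
  rwa [h₁, h₂] at hΩ

include hUn hSU in
theorem powAdd {x : G} {n : ℕ} (hS : ∀ j ≤ n, L.powN x j ∈ SU) :
    ∀ i j : ℕ, i + j ≤ n → L.mul (L.powN x i) (L.powN x j) = L.powN x (i + j) := by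
  intro i j
  induction j with
  | zero => intro _; simp [powN_zero, L.mul_one]
  | succ j ih =>
    intro hij
    have hxSU : x ∈ SU := by have := hS 1 (by omega); rwa [powN_one] at this
    have h1 : (L.powN x i, L.powN x j) ∈ L.Omega :=
      pairSU hUn hSU (hS i (by omega)) (hS j (by omega))
    have h2 : (L.powN x j, x) ∈ L.Omega := pairSU hUn hSU (hS j (by omega)) hxSU
    have hIH := ih (by omega)
    have h3 : (L.mul (L.powN x i) (L.powN x j), x) ∈ L.Omega := by
      rw [hIH]; exact pairSU hUn hSU (hS (i+j) (by omega)) hxSU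
    have h4 : (L.powN x i, L.mul (L.powN x j) x) ∈ L.Omega := by
      rw [← powN_succ]; exact pairSU hUn hSU (hS i (by omega)) (hS (j+1) (by omega))
    rw [powN_succ, ← L.assoc _ _ _ h1 h2 h3 h4, hIH, ← powN_succ]
    congr 1

include hUn hSU in
theorem repl_represents {x : G} {n : ℕ} (hS : ∀ j ≤ n, L.powN x j ∈ SU) :
    L.Represents (List.replicate n x) (L.powN x n) := by
  induction n using Nat.strong_induction_on with
  | _ n ih =>
    match n with
    | 0 => exact L.represents_nil
    | 1 => rw [powN_one]; exact L.represents_single x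
    | (m + 2) =>
      apply L.represents_of_forall (by simp)
      intro i h1 h2
      simp only [List.length_replicate] at h2
      refine ⟨L.powN x i, L.powN x (m + 2 - i), ?_, ?_, ?_, ?_⟩
      · rw [List.take_replicate, min_eq_left (by omega)]
        exact ih i (by omega) (fun j hj => hS j (by omega))
      · rw [List.drop_replicate]
        exact ih (m + 2 - i) (by omega) (fun j hj => hS j (by omega))
      · exact pairSU hUn hSU (hS i (by omega)) (hS (m + 2 - i) (by omega))
      · rw [powAdd hUn hSU hS i (m + 2 - i) (by omega)]
        congr 1; omega

include hUn hSU in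
theorem ordGE_eq (n : ℕ) :
    ordGE L SU n = {x | ∀ k ≤ n, L.powN x k ∈ SU ∧ L.powN (L.inv x) k ∈ SU} := by
  ext x
  constructor
  · intro hx k hk
    constructor
    · rcases Nat.eq_zero_or_pos k with rfl | hk0
      · rw [powN_zero]; exact one_mem_SU hSU
      · obtain ⟨b, hb, hbSU⟩ := hx (Int.ofNat k) (by simpa using hk)
        have : L.Represents (List.replicate k x) b := hb
        rw [L.represents_eq this, prodL_replicate] at hbSU
        exact hbSU
    · rcases Nat.eq_zero_or_pos k with rfl | hk0
      · rw [powN_zero]; exact one_mem_SU hSU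
      · obtain ⟨b, hb, hbSU⟩ := hx (Int.negSucc (k - 1)) (by simp only [Int.natAbs_negSucc]; omega)
        have : L.Represents (List.replicate (k - 1 + 1) (L.inv x)) b := hb
        rw [L.represents_eq this, prodL_replicate] at hbSU
        rwa [Nat.sub_add_cancel hk0] at hbSU
  · intro hx k hk
    match k with
    | Int.ofNat m =>
      replace hk : m ≤ n := by simpa using hk
      refine ⟨L.powN x m, ?_, (hx m hk).1⟩
      exact repl_represents hUn hSU (fun j hj => (hx j (le_trans hj hk)).1)
    | Int.negSucc m =>
      replace hk : m + 1 ≤ n := by simpa using hk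
      refine ⟨L.powN (L.inv x) (m + 1), ?_, (hx (m+1) hk).2⟩
      exact repl_represents hUn hSU (fun j hj => (hx j (le_trans hj hk)).2)

end
end LocalGroup

open scoped Topology
set_option linter.unusedSectionVars false
open LocalGroup
namespace LocalGroup
variable {G : Type*} [TopologicalSpace G] {L : LocalGroup G}

section
variable [T2Space G] {Un : ℕ → Set G} (hUn : L.IsProdChain Un) {SU : Set G}
  (hSU : L.IsSpecialNbhd Un SU) (hstd : L.Std)

/-- the set of `x` with `x^j ∈ SU` for `1 ≤ j ≤ k` -/
def Spow (L : LocalGroup G) (SU : Set G) (k : ℕ) : Set G :=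
  {x | ∀ j, 1 ≤ j → j ≤ k → L.powN x j ∈ SU}

theorem Spow_zero : Spow L SU 0 = Set.univ := by
  ext x; simp only [Spow, Set.mem_setOf_eq, Set.mem_univ, iff_true]
  intro j h1 h2; omega

theorem Spow_succ (k : ℕ) :
    Spow L SU (k+1) = Spow L SU k ∩ (fun x => L.powN x (k+1)) ⁻¹' SU := by
  ext x
  simp only [Spow, Set.mem_setOf_eq, Set.mem_inter_iff, Set.mem_preimage]
  constructor
  · exact fun h => ⟨fun j h1 h2 => h j h1 (by omega), h (k+1) (by omega) le_rfl⟩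
  · rintro ⟨h1, h2⟩ j hj1 hj2
    rcases eq_or_lt_of_le hj2 with rfl | hlt
    · exact h2
    · exact h1 j hj1 (by omega)

theorem Spow_anti {j k : ℕ} (h : j ≤ k) : Spow L SU k ⊆ Spow L SU j :=
  fun x hx i h1 h2 => hx i h1 (by omega)

theorem mem_SU_of_mem_Spow {x : G} {k : ℕ} (hk : 1 ≤ k) (hx : x ∈ Spow L SU k) : x ∈ SU := by
  have := hx 1 le_rfl hk; rwa [powN_one] at this

include hUn hSU in
theorem contPow : ∀ k : ℕ, ContinuousOn (fun x => L.powN x (k+1)) (Spow L SU k) := by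
  intro k
  induction k with
  | zero =>
    have : (fun x : G => L.powN x 1) = fun x => x := by
      funext x; rw [powN_one]
    rw [this]; exact continuousOn_id
  | succ k ih =>
    have hpair : ContinuousOn (fun x => (L.powN x (k+1), x)) (Spow L SU (k+1)) :=
      (ih.mono (Spow_anti (by omega))).prodMk continuousOn_id
    have hmaps : Set.MapsTo (fun x => (L.powN x (k+1), x)) (Spow L SU (k+1)) L.Omega := by
      intro x hx
      exact pairSU hUn hSU (hx (k+1) (by omega) le_rfl) (mem_SU_of_mem_Spow (by omega) hx)
    exact L.continuousOn_mul.comp hpair hmaps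

include hUn hSU in
theorem closed_Spow : ∀ k : ℕ, IsClosed (Spow L SU k) := by
  intro k
  induction k with
  | zero => rw [Spow_zero]; exact isClosed_univ
  | succ k ih =>
    rw [Spow_succ]
    exact (contPow hUn hSU k).preimage_isClosed_of_isClosed ih hSU.1.isClosed

include hUn hSU in
theorem ordGE_eq_inter (n : ℕ) :
    ordGE L SU n = Spow L SU n ∩ L.inv ⁻¹' Spow L SU n := by
  rw [ordGE_eq hUn hSU]
  ext x
  simp only [Set.mem_setOf_eq, Set.mem_inter_iff, Set.mem_preimage, Spow]
  constructor
  · intro h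
    exact ⟨fun j h1 h2 => (h j h2).1, fun j h1 h2 => (h j h2).2⟩
  · rintro ⟨h1, h2⟩ k hk
    rcases Nat.eq_zero_or_pos k with rfl | hk0
    · simp only [powN_zero]
      exact ⟨one_mem_SU hSU, one_mem_SU hSU⟩
    · exact ⟨h1 k hk0 hk, h2 k hk0 hk⟩

include hstd in
theorem continuous_inv' : Continuous L.inv := by
  have h := L.continuousOn_inv
  rw [hstd.1] at h
  rwa [← continuousOn_univ]

include hUn hSU hstd in
theorem closed_ordGE (n : ℕ) : IsClosed (ordGE L SU n) := by
  rw [ordGE_eq_inter hUn hSU]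
  exact (closed_Spow hUn hSU n).inter ((closed_Spow hUn hSU n).preimage (continuous_inv' hstd))

include hUn hSU hstd in
theorem compact_ordGE {n : ℕ} (hn : 1 ≤ n) : IsCompact (ordGE L SU n) := by
  apply IsCompact.of_isClosed_subset hSU.1 (closed_ordGE hUn hSU hstd n)
  rw [ordGE_eq_inter hUn hSU]
  exact fun x hx => mem_SU_of_mem_Spow hn hx.1

theorem ordGE_antitone {j k : ℕ} (h : j ≤ k) : ordGE L SU k ⊆ ordGE L SU j :=
  fun x hx i hi => hx i (by omega)

include hUn hSU hstd in
theorem symm_ordGE (n : ℕ) : L.IsSymmetric (ordGE L SU n) := by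
  constructor
  · rw [hstd.1]; exact Set.subset_univ _
  · have key : ∀ x, x ∈ ordGE L SU n → L.inv x ∈ ordGE L SU n := by
      intro x hx
      rw [ordGE_eq hUn hSU] at hx ⊢
      intro k hk
      rw [inv_inv' L hstd]
      exact ⟨(hx k hk).2, (hx k hk).1⟩
    apply Set.eq_of_subset_of_subset
    · rintro y ⟨x, hx, rfl⟩; exact key x hx
    · intro x hx
      exact ⟨L.inv x, key x hx, inv_inv' L hstd x⟩

/-- open sets for the neighborhood property -/
def Opow (L : LocalGroup G) (SU : Set G) : ℕ → Set G
  | 0 => Set.univ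
  | k + 1 => Opow L SU k ∩ (fun x => L.powN x (k+1)) ⁻¹' (interior SU)

include hUn hSU in
theorem Opow_subset_Spow : ∀ k, Opow L SU k ⊆ Spow L SU k := by
  intro k
  induction k with
  | zero => rw [Spow_zero]; exact Set.subset_univ _
  | succ k ih =>
    rw [Spow_succ]
    exact Set.inter_subset_inter ih (Set.preimage_mono interior_subset)

include hUn hSU in
theorem Opow_isOpen : ∀ k, IsOpen (Opow L SU k) ∧ L.one ∈ Opow L SU k := by
  intro k
  induction k with
  | zero => exact ⟨isOpen_univ, trivial⟩
  | succ k ih =>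
    constructor
    · exact ContinuousOn.isOpen_inter_preimage
        ((contPow hUn hSU k).mono (Opow_subset_Spow hUn hSU k)) ih.1 isOpen_interior
    · refine ⟨ih.2, ?_⟩
      simp only [Set.mem_preimage, powN_base_one]
      exact mem_interior_iff_mem_nhds.2 hSU.2.1

include hUn hSU hstd in
theorem ordGE_mem_nhds (n : ℕ) : ordGE L SU n ∈ 𝓝 L.one := by
  have hO := Opow_isOpen hUn hSU (L := L) n
  have hsub : Opow L SU n ∩ L.inv ⁻¹' Opow L SU n ⊆ ordGE L SU n := by
    rw [ordGE_eq_inter hUn hSU]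
    exact Set.inter_subset_inter (Opow_subset_Spow hUn hSU n)
      (Set.preimage_mono (Opow_subset_Spow hUn hSU n))
  apply Filter.mem_of_superset _ hsub
  apply IsOpen.mem_nhds
  · exact hO.1.inter (hO.1.preimage (continuous_inv' hstd))
  · refine ⟨hO.2, ?_⟩
    simp only [Set.mem_preimage, inv_one']
    exact hO.2

end
end LocalGroup

open scoped Topology
set_option linter.unusedSectionVars false
open LocalGroup
namespace LocalGroup
variable {G : Type*} [TopologicalSpace G] {L : LocalGroup G}

/-- integer powers -/
def zpF (L : LocalGroup G) (x : G) (k : ℤ) : G :=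
  if 0 ≤ k then L.powN x k.toNat else L.powN (L.inv x) (-k).toNat

theorem zpF_ofNat (x : G) (m : ℕ) : zpF L x (m : ℤ) = L.powN x m := by
  simp [zpF]

theorem zpF_negSucc (x : G) (m : ℕ) : zpF L x (Int.negSucc m) = L.powN (L.inv x) (m + 1) := by
  have h : ¬ (0 : ℤ) ≤ Int.negSucc m := not_le.mpr (Int.negSucc_lt_zero m)
  simp only [zpF, if_neg h, Int.neg_negSucc]
  norm_num

theorem zpF_negNat (x : G) (m : ℕ) : zpF L x (-(m : ℤ)) = L.powN (L.inv x) m := by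
  match m with
  | 0 => simp [zpF, powN_zero]
  | m + 1 =>
    rw [show (-((m + 1 : ℕ) : ℤ)) = Int.negSucc m by rw [Int.negSucc_eq]; push_cast; ring,
      zpF_negSucc]

theorem zpF_zero (x : G) : zpF L x 0 = L.one := by simp [zpF, powN_zero]
theorem zpF_one (x : G) : zpF L x 1 = x := by
  rw [show (1 : ℤ) = ((1 : ℕ) : ℤ) by norm_num, zpF_ofNat, powN_one]

section
variable {Un : ℕ → Set G} (hUn : L.IsProdChain Un) {SU : Set G}
  (hSU : L.IsSpecialNbhd Un SU) (hstd : L.Std) {x : G}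
  (hx : ∀ m : ℕ, L.powN x m ∈ SU ∧ L.powN (L.inv x) m ∈ SU)

include hx in
theorem zpF_mem (k : ℤ) : zpF L x k ∈ SU := by
  match k with
  | Int.ofNat m => rw [Int.ofNat_eq_natCast, zpF_ofNat]; exact (hx m).1
  | Int.negSucc m => rw [zpF_negSucc]; exact (hx (m+1)).2

include hUn hSU hstd hx in
theorem zpF_mul_right (a : ℤ) : L.mul (zpF L x a) x = zpF L x (a + 1) := by
  have hxSU : x ∈ SU := by have := (hx 1).1; rwa [powN_one] at this
  have hixSU : L.inv x ∈ SU := by have := (hx 1).2; rwa [powN_one] at this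
  match a with
  | Int.ofNat m =>
    rw [Int.ofNat_eq_natCast, zpF_ofNat,
      show ((m : ℤ) + 1) = ((m + 1 : ℕ) : ℤ) by push_cast; ring, zpF_ofNat, powN_succ]
  | Int.negSucc m =>
    rw [zpF_negSucc, show (Int.negSucc m + 1) = -(m : ℤ) by rw [Int.negSucc_eq]; ring, zpF_negNat]
    set P := L.powN (L.inv x) m with hP
    have h1 : (P, L.inv x) ∈ L.Omega := pairSU hUn hSU (hx m).2 hixSU
    have h2 : (L.inv x, x) ∈ L.Omega := L.mem_inv_left x (by rw [hstd.1]; trivial)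
    have h3 : (L.mul P (L.inv x), x) ∈ L.Omega := by
      rw [← powN_succ]; exact pairSU hUn hSU (hx (m+1)).2 hxSU
    have h4 : (P, L.mul (L.inv x) x) ∈ L.Omega := by
      rw [L.inv_mul_self x (by rw [hstd.1]; trivial)]; exact L.pair_one_right P
    rw [powN_succ, ← hP, L.assoc P (L.inv x) x h1 h2 h3 h4,
      L.inv_mul_self x (by rw [hstd.1]; trivial), L.mul_one]

include hUn hSU hstd hx in
theorem zpF_mul_right_inv (a : ℤ) : L.mul (zpF L x a) (L.inv x) = zpF L x (a - 1) := by
  have hxSU : x ∈ SU := by have := (hx 1).1; rwa [powN_one] at this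
  have hixSU : L.inv x ∈ SU := by have := (hx 1).2; rwa [powN_one] at this
  match a with
  | Int.ofNat 0 =>
    rw [show (Int.ofNat 0) = ((0:ℕ) : ℤ) by rfl, zpF_ofNat, powN_zero, L.one_mul,
      show ((0:ℕ) : ℤ) - 1 = -((1:ℕ) : ℤ) by norm_num, zpF_negNat, powN_one]
  | Int.ofNat (m+1) =>
    rw [show (Int.ofNat (m+1)) = ((m+1 : ℕ) : ℤ) by rfl, zpF_ofNat,
      show ((m+1 : ℕ) : ℤ) - 1 = ((m : ℕ) : ℤ) by push_cast; ring, zpF_ofNat]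
    set Q := L.powN x m with hQ
    have h1 : (Q, x) ∈ L.Omega := pairSU hUn hSU (hx m).1 hxSU
    have h2 : (x, L.inv x) ∈ L.Omega := L.mem_inv_right x (by rw [hstd.1]; trivial)
    have h3 : (L.mul Q x, L.inv x) ∈ L.Omega := by
      rw [← powN_succ]; exact pairSU hUn hSU (hx (m+1)).1 hixSU
    have h4 : (Q, L.mul x (L.inv x)) ∈ L.Omega := by
      rw [L.mul_inv_self x (by rw [hstd.1]; trivial)]; exact L.pair_one_right Q
    rw [powN_succ, ← hQ, L.assoc Q x (L.inv x) h1 h2 h3 h4,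
      L.mul_inv_self x (by rw [hstd.1]; trivial), L.mul_one]
  | Int.negSucc m =>
    rw [zpF_negSucc, show (Int.negSucc m - 1) = Int.negSucc (m+1) by
      rw [Int.negSucc_eq, Int.negSucc_eq]; push_cast; ring, zpF_negSucc]
    exact (L.powN_succ (L.inv x) (m+1)).symm

include hUn hSU hstd hx in
theorem zpF_add (a b : ℤ) : L.mul (zpF L x a) (zpF L x b) = zpF L x (a + b) := by
  have hxSU : x ∈ SU := by have := (hx 1).1; rwa [powN_one] at this
  have hixSU : L.inv x ∈ SU := by have := (hx 1).2; rwa [powN_one] at this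
  induction b using Int.induction_on with
  | zero => rw [zpF_zero, L.mul_one, add_zero]
  | succ k ih =>
    have hk : zpF L x ((k : ℤ) + 1) = L.mul (zpF L x k) x := (zpF_mul_right hUn hSU hstd hx k).symm
    have h1 : (zpF L x a, zpF L x (k : ℤ)) ∈ L.Omega :=
      pairSU hUn hSU (zpF_mem hx a) (zpF_mem hx _)
    have h2 : (zpF L x (k : ℤ), x) ∈ L.Omega := pairSU hUn hSU (zpF_mem hx _) hxSU
    have h3 : (L.mul (zpF L x a) (zpF L x (k : ℤ)), x) ∈ L.Omega := by
      rw [ih]; exact pairSU hUn hSU (zpF_mem hx _) hxSU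
    have h4 : (zpF L x a, L.mul (zpF L x (k : ℤ)) x) ∈ L.Omega := by
      rw [← hk]; exact pairSU hUn hSU (zpF_mem hx _) (zpF_mem hx _)
    rw [hk, ← L.assoc _ _ _ h1 h2 h3 h4, ih, zpF_mul_right hUn hSU hstd hx,
      show a + (k : ℤ) + 1 = a + ((k : ℤ) + 1) by ring]
  | pred k ih =>
    have hk : zpF L x (-(k : ℤ) - 1) = L.mul (zpF L x (-(k:ℤ))) (L.inv x) :=
      (zpF_mul_right_inv hUn hSU hstd hx (-(k:ℤ))).symm
    have h1 : (zpF L x a, zpF L x (-(k : ℤ))) ∈ L.Omega :=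
      pairSU hUn hSU (zpF_mem hx a) (zpF_mem hx _)
    have h2 : (zpF L x (-(k : ℤ)), L.inv x) ∈ L.Omega := pairSU hUn hSU (zpF_mem hx _) hixSU
    have h3 : (L.mul (zpF L x a) (zpF L x (-(k : ℤ))), L.inv x) ∈ L.Omega := by
      rw [ih]; exact pairSU hUn hSU (zpF_mem hx _) hixSU
    have h4 : (zpF L x a, L.mul (zpF L x (-(k : ℤ))) (L.inv x)) ∈ L.Omega := by
      rw [← hk]; exact pairSU hUn hSU (zpF_mem hx _) (zpF_mem hx _)
    rw [hk, ← L.assoc _ _ _ h1 h2 h3 h4, ih, zpF_mul_right_inv hUn hSU hstd hx,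
      show a + (-(k : ℤ) - 1) = a + -(k : ℤ) - 1 by ring]

include hUn hSU hstd hx in
theorem zpF_inv (k : ℤ) : L.inv (zpF L x k) = zpF L x (-k) := by
  apply L.inv_unique' hstd (pairSU hUn hSU (zpF_mem hx _) (zpF_mem hx _))
  rw [zpF_add hUn hSU hstd hx, add_neg_cancel, zpF_zero]

include hUn hSU hstd hx in
theorem all_pows_eq_one : x = L.one := by
  set H : Set G := Set.range (zpF L x) with hH
  have hsub : L.IsSubgroup H := by
    refine ⟨⟨0, zpF_zero x⟩, ?_, ?_, ?_, ?_⟩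
    · rw [hstd.1]; exact Set.subset_univ _
    · rintro _ ⟨a, rfl⟩ _ ⟨b, rfl⟩
      exact pairSU hUn hSU (zpF_mem hx _) (zpF_mem hx _)
    · rintro _ ⟨a, rfl⟩
      exact ⟨-a, (zpF_inv hUn hSU hstd hx a).symm⟩
    · rintro _ ⟨a, rfl⟩ _ ⟨b, rfl⟩
      exact ⟨a + b, (zpF_add hUn hSU hstd hx a b).symm⟩
  have hHSU : H ⊆ SU := by rintro _ ⟨a, rfl⟩; exact zpF_mem hx _
  have heq : H = {L.one} := hSU.2.2.2.2.1 H hsub hHSU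
  have hxH : x ∈ H := ⟨1, zpF_one x⟩
  rw [heq] at hxH
  exact hxH

end
end LocalGroup

open scoped Topology
set_option linter.unusedSectionVars false
open LocalGroup
namespace LocalGroup
variable {G : Type*} [TopologicalSpace G] {L : LocalGroup G}

section
variable [T2Space G] {Un : ℕ → Set G} (hUn : L.IsProdChain Un) {SU : Set G}
  (hSU : L.IsSpecialNbhd Un SU) (hstd : L.Std)

include hUn hSU hstd in
theorem basis_ordGE {W : Set G} (hW : W ∈ 𝓝 L.one) : ∃ n : ℕ, 1 ≤ n ∧ ordGE L SU n ⊆ W := by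
  by_contra hcon
  push_neg at hcon
  set C : ℕ → Set G := fun m => ordGE L SU (m + 1) ∩ (interior W)ᶜ with hC
  have hdec : ∀ m, C (m + 1) ⊆ C m := fun m =>
    Set.inter_subset_inter (ordGE_antitone (by omega)) subset_rfl
  have hne : ∀ m, (C m).Nonempty := by
    intro m
    obtain ⟨y, hy, hyW⟩ := Set.not_subset.1 (hcon (m + 1) (by omega))
    exact ⟨y, hy, fun hin => hyW (interior_subset hin)⟩
  have hcl : ∀ m, IsClosed (C m) := fun m =>
    (closed_ordGE hUn hSU hstd (m + 1)).inter isOpen_interior.isClosed_compl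
  have hcpt : IsCompact (C 0) :=
    IsCompact.of_isClosed_subset (compact_ordGE hUn hSU hstd le_rfl) (hcl 0)
      Set.inter_subset_left
  obtain ⟨y, hy⟩ :=
    IsCompact.nonempty_iInter_of_sequence_nonempty_isCompact_isClosed C hdec hne hcpt hcl
  simp only [Set.mem_iInter] at hy
  have hxall : ∀ m : ℕ, L.powN y m ∈ SU ∧ L.powN (L.inv y) m ∈ SU := by
    intro m
    have hym : y ∈ ordGE L SU m := ordGE_antitone (by omega) (hy m).1
    rw [ordGE_eq hUn hSU] at hym
    exact hym m le_rfl
  have hy1 : y = L.one := all_pows_eq_one hUn hSU hstd hxall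
  have : y ∈ (interior W)ᶜ := (hy 0).2
  rw [hy1] at this
  exact this (mem_interior_iff_mem_nhds.2 hW)

include hUn in
theorem Un_anti : ∀ m j : ℕ, 1 ≤ j → j ≤ m → Un m ⊆ Un j := by
  intro m
  induction m with
  | zero => intro j h1 h2; omega
  | succ m ih =>
    intro j h1 h2
    rcases eq_or_lt_of_le h2 with rfl | hlt
    · exact subset_rfl
    · exact Set.Subset.trans (hUn m (by omega)).2.2.2.1 (ih j h1 (by omega))

include hUn in
theorem claimD : ∀ m : ℕ, 1 ≤ m → ∀ U' : Set G, IsOpen U' → L.one ∈ U' →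
    ∃ P : Set G, IsOpen P ∧ L.one ∈ P ∧ P ⊆ Un m ∧
      ∀ l : List G, l.length = m → (∀ a ∈ l, a ∈ P) → L.prodL l ∈ U' := by
  intro m
  induction m with
  | zero => intro h; omega
  | succ m ih =>
    intro _ U' hU' h1U'
    rcases Nat.eq_zero_or_pos m with rfl | hm
    · -- base case m + 1 = 1
      refine ⟨U' ∩ Un 1, hU'.inter (hUn 1 le_rfl).1, ⟨h1U', (hUn 1 le_rfl).2.1⟩,
        Set.inter_subset_right, ?_⟩
      intro l hl hmem
      obtain ⟨a, rfl⟩ := List.length_eq_one_iff.1 hl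
      rw [prodL_single]
      exact (hmem a (by simp)).1
    · -- inductive step
      have hc : ContinuousAt (fun q : G × G => L.mul q.1 q.2) (L.one, L.one) :=
        L.continuousOn_mul.continuousAt (L.isOpen_Omega.mem_nhds (L.pair_one_left L.one))
      have hpre : (fun q : G × G => L.mul q.1 q.2) ⁻¹' U' ∈ 𝓝 ((L.one, L.one) : G × G) := by
        apply hc
        show U' ∈ 𝓝 (L.mul L.one L.one)
        rw [L.one_mul]
        exact hU'.mem_nhds h1U'
      rw [nhds_prod_eq] at hpre
      obtain ⟨A, hA, B, hB, hAB⟩ := Filter.mem_prod_iff.1 hpre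
      obtain ⟨A', hA'sub, hA'open, h1A'⟩ := mem_nhds_iff.1 hA
      obtain ⟨B', hB'sub, hB'open, h1B'⟩ := mem_nhds_iff.1 hB
      obtain ⟨P₁, hP₁open, h1P₁, hP₁sub, hP₁⟩ := ih hm A' hA'open h1A'
      refine ⟨P₁ ∩ B' ∩ Un (m + 1),
        (hP₁open.inter hB'open).inter (hUn (m+1) (by omega)).1,
        ⟨⟨h1P₁, h1B'⟩, (hUn (m+1) (by omega)).2.1⟩, Set.inter_subset_right, ?_⟩
      intro l hl hmem
      rcases List.eq_nil_or_concat l with rfl | ⟨l', z, rfl⟩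
      · simp at hl
      · rw [List.concat_eq_append] at hmem ⊢
        rw [prodL_concat]
        have hl' : l'.length = m := by
          rw [List.concat_eq_append, List.length_append] at hl
          simpa using hl
        have hpl' : L.prodL l' ∈ A' :=
          hP₁ l' hl' (fun a ha => ((hmem a (by simp [ha])).1).1)
        have hz : z ∈ B' := ((hmem z (by simp)).1).2
        exact hAB (Set.mk_mem_prod (hA'sub hpl') (hB'sub hz))

end
end LocalGroup

set_option linter.unusedVariables false
open scoped Topology Manifold ENNReal
open LocalGroup

/-- the sets `Vₙ = {x : ord(x) ≥ n}` form a countable basis of compact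
symmetric neighborhoods of `1`. -/
theorem statement_7 {G : Type*} [TopologicalSpace G] [T2Space G] [LocallyCompactSpace G]
    (L : LocalGroup G) (hstd : L.Std) (Un : ℕ → Set G) (hUn : L.IsProdChain Un)
    (hNSS : L.NSS) (SU : Set G) (hSU : L.IsSpecialNbhd Un SU) :
    (∀ n : ℕ, 1 ≤ n → IsCompact (ordGE L SU n) ∧ L.IsSymmetric (ordGE L SU n) ∧
        ordGE L SU n ∈ 𝓝 L.one ∧ ordGE L SU (n + 1) ⊆ ordGE L SU n) ∧
      (∀ W ∈ 𝓝 L.one, ∃ n : ℕ, 1 ≤ n ∧ ordGE L SU n ⊆ W) ∧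
      ∀ U' ∈ 𝓝 L.one, ∀ m : ℕ, ∃ N : ℕ, ∀ n ≥ N, ∀ l : List G, l.length = m →
        (∀ x ∈ l, x ∈ ordGE L SU n) → ∃ b, L.Represents l b ∧ b ∈ U' := by
  refine ⟨?_, ?_, ?_⟩
  · intro n hn
    exact ⟨compact_ordGE hUn hSU hstd hn, symm_ordGE hUn hSU hstd n,
      ordGE_mem_nhds hUn hSU hstd n, ordGE_antitone (by omega)⟩
  · intro W hW
    exact basis_ordGE hUn hSU hstd hW
  · intro U' hU' m
    rcases Nat.eq_zero_or_pos m with rfl | hm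
    · refine ⟨0, fun n _ l hl _ => ?_⟩
      rw [List.length_eq_zero_iff] at hl
      subst hl
      exact ⟨L.one, L.represents_nil, mem_of_mem_nhds hU'⟩
    · obtain ⟨P, hPopen, h1P, hPsub, hP⟩ :=
        claimD hUn m hm (interior U') isOpen_interior (mem_interior_iff_mem_nhds.2 hU')
      obtain ⟨N, hN1, hNsub⟩ := basis_ordGE hUn hSU hstd (hPopen.mem_nhds h1P)
      refine ⟨N, fun n hn l hl hmem => ?_⟩
      have hmemP : ∀ x ∈ l, x ∈ P := fun x hx =>
        hNsub (ordGE_antitone hn (hmem x hx))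
      have hmemU : ∀ x ∈ l, x ∈ Un m := fun x hx => hPsub (hmemP x hx)
      obtain ⟨b, hb⟩ := (hUn m hm).2.2.2.2 l hl hmemU
      refine ⟨b, hb, ?_⟩
      rw [L.represents_eq hb]
      exact interior_subset (hP l hl hmemP)
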